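/- Let z(ζ) = (Δ(ζ) + √(Δ(ζ)² − 4))/2 where Δ is analytic near a real point x₀ with |Δ(x₀)| < 2 and Δ'(x₀) ≠ 0. Then ∂/∂y |ln|z(x + iy)|| at (x₀, 0) equals −Im(Δ'(x₀)/√(Δ(x₀)² − 4)), and this quantity is nonzero. -/

import Mathlib

open Complex

/-- The normal derivative of ln|z(x+iy)| at a real point x₀ where |Δ(x₀)| < 2 and
Δ'(x₀) ≠ 0: it equals −Im(Δ'(x₀)/√(Δ(x₀)² − 4)) and is nonzero. Here
z = (Δ + √(Δ² − 4))/2 with s = √(Δ² − 4) an analytic branch of the square root. -/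
theorem normal_derivative_log_abs_eigenvalue
    (Δ : ℂ → ℂ) (x₀ : ℝ)
    (hΔ_an : AnalyticAt ℂ Δ (x₀ : ℂ))
    (hΔ_real : (Δ (x₀ : ℂ)).im = 0)
    (hΔ'_real : (deriv Δ (x₀ : ℂ)).im = 0)
    (hΔ_lt : ‖Δ (x₀ : ℂ)‖ < 2)
    (hΔ' : deriv Δ (x₀ : ℂ) ≠ 0)
    (s : ℂ → ℂ) (hs_an : AnalyticAt ℂ s (x₀ : ℂ))
    (hs_branch : ∀ᶠ ζ in nhds (x₀ : ℂ), s ζ ^ 2 = Δ ζ ^ 2 - 4)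
    (hs_sign : 0 < (s (x₀ : ℂ)).im) :
    deriv (fun y : ℝ =>
        Real.log ‖(Δ ((x₀ : ℂ) + y * Complex.I)
          + s ((x₀ : ℂ) + y * Complex.I)) / 2‖) 0
      = -(deriv Δ (x₀ : ℂ) / s (x₀ : ℂ)).im ∧
    -(deriv Δ (x₀ : ℂ) / s (x₀ : ℂ)).im ≠ 0 := by
  set D := Δ (x₀ : ℂ) with hD
  set D' := deriv Δ (x₀ : ℂ) with hDd
  set S := s (x₀ : ℂ) with hSdef
  have hS_ne : S ≠ 0 := by
    intro h
    rw [h] at hs_sign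
    simp at hs_sign
  have hSsq : S ^ 2 = D ^ 2 - 4 := hs_branch.self_of_nhds
  have hS_re : S.re = 0 := by
    have h1 : (S ^ 2).im = 0 := by
      rw [hSsq]
      simp [pow_two, Complex.sub_im, Complex.mul_im, hΔ_real]
    rw [pow_two, Complex.mul_im] at h1
    nlinarith [hs_sign]
  have hΔd : HasDerivAt Δ D' (x₀ : ℂ) := hΔ_an.differentiableAt.hasDerivAt
  have hsd : HasDerivAt s (deriv s (x₀ : ℂ)) (x₀ : ℂ) := hs_an.differentiableAt.hasDerivAt
  set S' := deriv s (x₀ : ℂ) with hS'def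
  have hsq1 : HasDerivAt (fun ζ => s ζ ^ 2) (2 * S * S') (x₀ : ℂ) := by
    have := hsd.fun_pow 2
    simpa [mul_comm, mul_assoc, mul_left_comm] using this
  have hsq2 : HasDerivAt (fun ζ => s ζ ^ 2) (2 * D * D') (x₀ : ℂ) := by
    have h : HasDerivAt (fun ζ => Δ ζ ^ 2 - 4) (2 * D * D') (x₀ : ℂ) := by
      have := (hΔd.pow 2).sub_const 4
      simpa [mul_comm, mul_assoc, mul_left_comm] using this
    exact h.congr_of_eventuallyEq hs_branch
  have huniq : 2 * S * S' = 2 * D * D' := hsq1.unique hsq2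
  have hS'eq : S' = D * D' / S := by
    rw [eq_div_iff hS_ne]
    linear_combination (1/2 : ℂ) * huniq
  -- the value z(x₀) and its nonvanishing
  set Z : ℂ := (D + S) / 2 with hZdef
  have hZim : 0 < Z.im := by
    simp only [hZdef, Complex.div_im, Complex.add_im, Complex.add_re, hΔ_real]
    norm_num
    positivity
  have hZ_ne : Z ≠ 0 := by
    intro h
    rw [h] at hZim
    simp at hZim
  have hDS_ne : D + S ≠ 0 := by
    intro h
    apply hZ_ne
    rw [hZdef, h, zero_div]
  -- derivative of z
  have hz : HasDerivAt (fun ζ => (Δ ζ + s ζ) / 2) ((D' + S') / 2) (x₀ : ℂ) :=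
    (hΔd.add hsd).div_const 2
  -- log ∘ z
  have hlog : HasDerivAt (fun ζ => Complex.log ((Δ ζ + s ζ) / 2))
      (Z⁻¹ * ((D' + S') / 2)) (x₀ : ℂ) := by
    have hmem : Z ∈ Complex.slitPlane := Complex.mem_slitPlane_iff.mpr (Or.inr hZim.ne')
    exact (Complex.hasDerivAt_log hmem).comp (x₀ : ℂ) hz
  -- the vertical line
  have hg : HasDerivAt (fun y : ℝ => (x₀ : ℂ) + y * I) I 0 := by
    have h1 : HasDerivAt (fun y : ℝ => (y : ℂ)) 1 0 := by
      simpa using (hasDerivAt_id (0 : ℝ)).ofReal_comp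
    simpa using (h1.mul_const I).const_add (x₀ : ℂ)
  have hg0 : (x₀ : ℂ) + (0 : ℝ) * I = (x₀ : ℂ) := by simp
  -- compose
  have hcomp : HasDerivAt (fun y : ℝ => Complex.log ((Δ ((x₀ : ℂ) + y * I)
      + s ((x₀ : ℂ) + y * I)) / 2)) (I • (Z⁻¹ * ((D' + S') / 2))) 0 := by
    have hF : HasFDerivAt (fun ζ => Complex.log ((Δ ζ + s ζ) / 2))
        (((1 : ℂ →L[ℂ] ℂ).smulRight (Z⁻¹ * ((D' + S') / 2))).restrictScalars ℝ)
        ((fun y : ℝ => (x₀ : ℂ) + y * I) 0) := by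
      rw [show ((fun y : ℝ => (x₀ : ℂ) + y * I) 0) = (x₀ : ℂ) by simp]
      exact hlog.hasFDerivAt.restrictScalars ℝ
    simpa [Function.comp_def] using hF.comp_hasDerivAt 0 hg
  have hre : HasDerivAt (fun y : ℝ => Real.log ‖(Δ ((x₀ : ℂ) + y * I)
      + s ((x₀ : ℂ) + y * I)) / 2‖) ((I * (Z⁻¹ * ((D' + S') / 2))).re) 0 := by
    have := Complex.reCLM.hasFDerivAt.comp_hasDerivAt 0 hcomp
    simp only [smul_eq_mul] at this
    exact this.congr_of_eventuallyEq (Filter.Eventually.of_forall fun y => by simp [Complex.log_re])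
  -- simplify derivative value
  have key : Z⁻¹ * ((D' + S') / 2) = D' / S := by
    rw [hS'eq, hZdef]
    field_simp
    ring
  have hval : (I * (Z⁻¹ * ((D' + S') / 2))).re = -(D' / S).im := by
    rw [key, Complex.mul_re, Complex.I_re, Complex.I_im]
    ring
  have hderiv : deriv (fun y : ℝ =>
      Real.log ‖(Δ ((x₀ : ℂ) + y * I)
        + s ((x₀ : ℂ) + y * I)) / 2‖) 0 = -(D' / S).im := by
    rw [hre.deriv, hval]
  refine ⟨hderiv, ?_⟩
  -- nonvanishing
  have hD're : D'.re ≠ 0 := by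
    intro h
    apply hΔ'
    exact Complex.ext h hΔ'_real
  have : (D' / S).im = -D'.re * S.im / Complex.normSq S := by
    rw [Complex.div_im, hΔ'_real, hS_re]
    ring
  rw [this]
  have hnormSq : Complex.normSq S ≠ 0 := (Complex.normSq_pos.mpr hS_ne).ne'
  simp only [neg_ne_zero]
  exact div_ne_zero (mul_ne_zero (neg_ne_zero.mpr hD're) hs_sign.ne') hnormSq
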